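/- Let n, m ≥ 3 and let M be the mn × mn (0,1)-matrix indexed by ZMod n × ZMod m whose ((i,j),(k,l))-entry is 1 exactly when the face vertex (k,l) of the Union Jack lattice UJL(n,m) is adjacent to the grid vertex (i,j), i.e. when (k,l) ∈ {(i,j), (i−1,j), (i,j−1), (i−1,j−1)}. Then for every x, det(x·I_{2mn} − Q(UJL(n,m))) = det( (x−4)(x−8)·I_{mn} − (x−4)·A(C_n □ C_m) − M·Mᵀ ), where A(C_n □ C_m) is the adjacency matrix of the Cartesian product of the cycles C_n and C_m (the n×m toroidal square lattice on ZMod n × ZMod m). -/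

import Mathlib

open scoped Classical
open Matrix

noncomputable section

/-- Vertex set of the Union Jack lattice `UJL(n,m)`: the first summand consists of the
"grid vertices" of the `n × m` toroidal square lattice, the second summand of the
"face vertices" inserted in each face. -/
abbrev UJLVert (n m : ℕ) : Type := (ZMod n × ZMod m) ⊕ (ZMod n × ZMod m)

/-- Base adjacency relation of the Union Jack lattice (to be symmetrized):
grid vertex `(i,j)` is related to the grid vertices `(i+1,j)` and `(i,j+1)`
(symmetrization yields all four grid neighbours `(i±1,j)`, `(i,j±1)`), and the
grid vertex `(i,j)` is related to the face vertices `(i,j)`, `(i-1,j)`, `(i,j-1)`,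
`(i-1,j-1)`, i.e. the face vertex `(k,l)` is adjacent to the grid vertices
`(k,l)`, `(k+1,l)`, `(k,l+1)`, `(k+1,l+1)`. -/
def UJLRel (n m : ℕ) : UJLVert n m → UJLVert n m → Prop
  | Sum.inl p, Sum.inl q => (q.1 = p.1 + 1 ∧ q.2 = p.2) ∨ (q.1 = p.1 ∧ q.2 = p.2 + 1)
  | Sum.inl p, Sum.inr q =>
      (q.1 = p.1 ∧ q.2 = p.2) ∨ (q.1 = p.1 - 1 ∧ q.2 = p.2) ∨
        (q.1 = p.1 ∧ q.2 = p.2 - 1) ∨ (q.1 = p.1 - 1 ∧ q.2 = p.2 - 1)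
  | _, _ => False

/-- The Union Jack lattice `UJL(n,m)` with toroidal boundary condition. -/
def UJL (n m : ℕ) : SimpleGraph (UJLVert n m) := SimpleGraph.fromRel (UJLRel n m)

/-- `cos α_i` where `α_i = 2 π i / n`. -/
def cosα (n i : ℕ) : ℝ := Real.cos (2 * Real.pi * i / n)

/-- The signless Laplacian matrix `Q(UJL(n,m)) = D(UJL(n,m)) + A(UJL(n,m))`. -/
def signlessLaplacianUJL (n m : ℕ) [NeZero n] [NeZero m] :
    Matrix (UJLVert n m) (UJLVert n m) ℝ :=
  Matrix.diagonal (fun v => ((UJL n m).degree v : ℝ)) + (UJL n m).adjMatrix ℝ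

/-- The cycle `C_n` on `ZMod n`: `i` is adjacent to `i + 1` and `i - 1`. -/
def cycleGraph (n : ℕ) : SimpleGraph (ZMod n) := SimpleGraph.fromRel (fun i k => k = i + 1)

/-- The `mn × mn` (0,1)-matrix `M` recording the adjacency between the grid vertices and the
face vertices of `UJL(n,m)`: the `((i,j),(k,l))`-entry is `1` exactly when the face vertex
`(k,l)` is adjacent to the grid vertex `(i,j)`, i.e. `(k,l) ∈ {(i,j),(i−1,j),(i,j−1),(i−1,j−1)}`. -/
def Mmat (n m : ℕ) : Matrix (ZMod n × ZMod m) (ZMod n × ZMod m) ℝ :=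
  Matrix.of fun p q =>
    if (q.1 = p.1 ∧ q.2 = p.2) ∨ (q.1 = p.1 - 1 ∧ q.2 = p.2) ∨
        (q.1 = p.1 ∧ q.2 = p.2 - 1) ∨ (q.1 = p.1 - 1 ∧ q.2 = p.2 - 1) then (1 : ℝ) else 0


section Helpers

lemma aux_eq_sub_one_iff {R : Type*} [CommRing R] (a b : R) : a = b - 1 ↔ b = a + 1 := by
  constructor <;> intro h <;> linear_combination -h

lemma aux_one_ne_zero {n : ℕ} (hn : 3 ≤ n) : (1 : ZMod n) ≠ 0 := by
  haveI : Fact (1 < n) := ⟨by omega⟩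
  exact one_ne_zero

lemma aux_two_ne_zero {n : ℕ} (hn : 3 ≤ n) : (2 : ZMod n) ≠ 0 := by
  haveI : NeZero n := ⟨by omega⟩
  intro h
  rw [show ((2 : ZMod n)) = ((2 : ℕ) : ZMod n) by push_cast; ring,
    ZMod.natCast_eq_zero_iff] at h
  have := Nat.le_of_dvd (by norm_num) h
  omega

variable {n m : ℕ}

lemma UJL_adj_inl_inl (h1n : (1 : ZMod n) ≠ 0) (h1m : (1 : ZMod m) ≠ 0)
    (p q : ZMod n × ZMod m) :
    (UJL n m).Adj (Sum.inl p) (Sum.inl q) ↔ ((cycleGraph n).boxProd (cycleGraph m)).Adj p q := by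
  simp only [UJL, SimpleGraph.fromRel_adj, UJLRel, ne_eq, Sum.inl.injEq,
    SimpleGraph.boxProd_adj, cycleGraph]
  constructor
  · rintro ⟨hne, (⟨h1, h2⟩ | ⟨h1, h2⟩) | (⟨h1, h2⟩ | ⟨h1, h2⟩)⟩
    · exact Or.inl ⟨⟨fun h => h1n (by linear_combination -h1 - h), Or.inl h1⟩, h2.symm⟩
    · exact Or.inr ⟨⟨fun h => h1m (by linear_combination -h2 - h), Or.inl h2⟩, h1.symm⟩
    · exact Or.inl ⟨⟨fun h => h1n (by linear_combination h - h1), Or.inr h1⟩, h2⟩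
    · exact Or.inr ⟨⟨fun h => h1m (by linear_combination h - h2), Or.inr h2⟩, h1⟩
  · rintro (⟨⟨hne, h | h⟩, h2⟩ | ⟨⟨hne, h | h⟩, h2⟩)
    · exact ⟨fun he => hne (congrArg Prod.fst he), Or.inl (Or.inl ⟨h, h2.symm⟩)⟩
    · exact ⟨fun he => hne (congrArg Prod.fst he), Or.inr (Or.inl ⟨h, h2⟩)⟩
    · exact ⟨fun he => hne (congrArg Prod.snd he), Or.inl (Or.inr ⟨h2.symm, h⟩)⟩
    · exact ⟨fun he => hne (congrArg Prod.snd he), Or.inr (Or.inr ⟨h2, h⟩)⟩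

lemma UJL_adj_inl_inr (p q : ZMod n × ZMod m) :
    (UJL n m).Adj (Sum.inl p) (Sum.inr q) ↔
      ((q.1 = p.1 ∧ q.2 = p.2) ∨ (q.1 = p.1 - 1 ∧ q.2 = p.2) ∨
        (q.1 = p.1 ∧ q.2 = p.2 - 1) ∨ (q.1 = p.1 - 1 ∧ q.2 = p.2 - 1)) := by
  simp only [UJL, SimpleGraph.fromRel_adj, UJLRel, ne_eq]
  simp

lemma UJL_not_adj_inr_inr (p q : ZMod n × ZMod m) :
    ¬ (UJL n m).Adj (Sum.inr p) (Sum.inr q) := by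
  simp [UJL, SimpleGraph.fromRel_adj, UJLRel]

lemma neighborFinset_inr [NeZero n] [NeZero m] (p : ZMod n × ZMod m) :
    (UJL n m).neighborFinset (Sum.inr p) =
      {Sum.inl (p.1, p.2), Sum.inl (p.1 + 1, p.2), Sum.inl (p.1, p.2 + 1),
        Sum.inl (p.1 + 1, p.2 + 1)} := by
  ext w
  rcases w with q | q <;> rw [SimpleGraph.mem_neighborFinset]
  · simp only [SimpleGraph.mem_neighborFinset, UJL, SimpleGraph.fromRel_adj, UJLRel, ne_eq,
      Finset.mem_insert, Finset.mem_singleton, Sum.inl.injEq, Prod.ext_iff, false_or, or_false]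
    constructor
    · rintro ⟨-, ⟨h1, h2⟩ | ⟨h1, h2⟩ | ⟨h1, h2⟩ | ⟨h1, h2⟩⟩
      · exact Or.inl ⟨h1.symm, h2.symm⟩
      · exact Or.inr (Or.inl ⟨by linear_combination -h1, h2.symm⟩)
      · exact Or.inr (Or.inr (Or.inl ⟨h1.symm, by linear_combination -h2⟩))
      · exact Or.inr (Or.inr (Or.inr ⟨by linear_combination -h1, by linear_combination -h2⟩))
    · rintro (⟨h1, h2⟩ | ⟨h1, h2⟩ | ⟨h1, h2⟩ | ⟨h1, h2⟩) <;>
      refine ⟨by simp, ?_⟩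
      · exact Or.inl ⟨h1.symm, h2.symm⟩
      · exact Or.inr (Or.inl ⟨by linear_combination -h1, h2.symm⟩)
      · exact Or.inr (Or.inr (Or.inl ⟨h1.symm, by linear_combination -h2⟩))
      · exact Or.inr (Or.inr (Or.inr ⟨by linear_combination -h1, by linear_combination -h2⟩))
  · simp [UJL, SimpleGraph.fromRel_adj, UJLRel]

lemma degree_inr [NeZero n] [NeZero m] (h1n : (1 : ZMod n) ≠ 0) (h1m : (1 : ZMod m) ≠ 0)
    (p : ZMod n × ZMod m) : (UJL n m).degree (Sum.inr p) = 4 := by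
  rw [← SimpleGraph.card_neighborFinset_eq_degree, neighborFinset_inr]
  rw [Finset.card_insert_of_notMem (by simp [Prod.ext_iff, h1n, h1m]),
    Finset.card_insert_of_notMem (by simp [Prod.ext_iff, h1n, h1m]),
    Finset.card_insert_of_notMem (by simp [Prod.ext_iff, h1n, h1m]),
    Finset.card_singleton]

lemma neighborFinset_inl [NeZero n] [NeZero m] (h1n : (1 : ZMod n) ≠ 0)
    (h1m : (1 : ZMod m) ≠ 0) (p : ZMod n × ZMod m) :
    (UJL n m).neighborFinset (Sum.inl p) =
      {Sum.inl (p.1 + 1, p.2), Sum.inl (p.1 - 1, p.2), Sum.inl (p.1, p.2 + 1),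
        Sum.inl (p.1, p.2 - 1), Sum.inr (p.1, p.2), Sum.inr (p.1 - 1, p.2),
        Sum.inr (p.1, p.2 - 1), Sum.inr (p.1 - 1, p.2 - 1)} := by
  ext w
  rcases w with q | q <;> rw [SimpleGraph.mem_neighborFinset]
  · simp only [SimpleGraph.mem_neighborFinset, UJL, SimpleGraph.fromRel_adj, UJLRel, ne_eq,
      Finset.mem_insert, Finset.mem_singleton, Sum.inl.injEq, Sum.inr.injEq, Prod.ext_iff,
      false_or, or_false, reduceCtorEq]
    constructor
    · rintro ⟨hne, (⟨h1, h2⟩ | ⟨h1, h2⟩) | ⟨h1, h2⟩ | ⟨h1, h2⟩⟩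
      · exact Or.inl ⟨h1, h2⟩
      · exact Or.inr (Or.inr (Or.inl ⟨h1, h2⟩))
      · exact Or.inr (Or.inl ⟨by linear_combination -h1, h2.symm⟩)
      · exact Or.inr (Or.inr (Or.inr ⟨h1.symm, by linear_combination -h2⟩))
    · rintro (⟨h1, h2⟩ | ⟨h1, h2⟩ | ⟨h1, h2⟩ | ⟨h1, h2⟩)
      · exact ⟨fun h => h1n (by linear_combination -h1 - h.1), Or.inl (Or.inl ⟨h1, h2⟩)⟩
      · exact ⟨fun h => h1n (by linear_combination h1 + h.1),
          Or.inr (Or.inl ⟨by linear_combination -h1, h2.symm⟩)⟩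
      · exact ⟨fun h => h1m (by linear_combination -h2 - h.2), Or.inl (Or.inr ⟨h1, h2⟩)⟩
      · exact ⟨fun h => h1m (by linear_combination h2 + h.2),
          Or.inr (Or.inr ⟨h1.symm, by linear_combination -h2⟩)⟩
  · simp only [SimpleGraph.mem_neighborFinset, UJL, SimpleGraph.fromRel_adj, UJLRel, ne_eq,
      Finset.mem_insert, Finset.mem_singleton, Sum.inl.injEq, Sum.inr.injEq, Prod.ext_iff,
      false_or, or_false, reduceCtorEq]
    tauto

lemma degree_inl [NeZero n] [NeZero m] (h1n : (1 : ZMod n) ≠ 0) (h1m : (1 : ZMod m) ≠ 0)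
    (h2n : (2 : ZMod n) ≠ 0) (h2m : (2 : ZMod m) ≠ 0)
    (p : ZMod n × ZMod m) : (UJL n m).degree (Sum.inl p) = 8 := by
  have hAn : ∀ a : ZMod n, a + 1 ≠ a - 1 := fun a h => h2n (by linear_combination h)
  have hAm : ∀ a : ZMod m, a + 1 ≠ a - 1 := fun a h => h2m (by linear_combination h)
  have hBn : ∀ a : ZMod n, a ≠ a - 1 := fun a h => h1n (by linear_combination h)
  have hBm : ∀ a : ZMod m, a ≠ a - 1 := fun a h => h1m (by linear_combination h)
  rw [← SimpleGraph.card_neighborFinset_eq_degree, neighborFinset_inl h1n h1m]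
  rw [Finset.card_insert_of_notMem
      (by simp [Prod.ext_iff, h1n, h1m, hAn, hAm, hBn, hBm, sub_eq_self]),
    Finset.card_insert_of_notMem
      (by simp [Prod.ext_iff, h1n, h1m, hAn, hAm, hBn, hBm, sub_eq_self]),
    Finset.card_insert_of_notMem
      (by simp [Prod.ext_iff, h1n, h1m, hAn, hAm, hBn, hBm, sub_eq_self]),
    Finset.card_insert_of_notMem
      (by simp [Prod.ext_iff, h1n, h1m, hAn, hAm, hBn, hBm, sub_eq_self]),
    Finset.card_insert_of_notMem
      (by simp [Prod.ext_iff, h1n, h1m, hAn, hAm, hBn, hBm, sub_eq_self]),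
    Finset.card_insert_of_notMem
      (by simp [Prod.ext_iff, h1n, h1m, hAn, hAm, hBn, hBm, sub_eq_self]),
    Finset.card_insert_of_notMem
      (by simp [Prod.ext_iff, h1n, h1m, hAn, hAm, hBn, hBm, sub_eq_self]),
    Finset.card_singleton]

end Helpers

/-- For `n, m ≥ 3` and every `x`,
`det(x·I_{2mn} − Q(UJL(n,m))) = det((x−4)(x−8)·I_{mn} − (x−4)·A(C_n □ C_m) − M·Mᵀ)`,
where `A(C_n □ C_m)` is the adjacency matrix of the Cartesian (box) product of the cycles
`C_n` and `C_m`, i.e. of the `n × m` toroidal square lattice. -/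
theorem signlessLaplacian_det_reduction_UJL (n m : ℕ) (hn : 3 ≤ n) (hm : 3 ≤ m) :
    haveI : NeZero n := ⟨by omega⟩
    haveI : NeZero m := ⟨by omega⟩
    ∀ x : ℝ,
      (x • (1 : Matrix (UJLVert n m) (UJLVert n m) ℝ) - signlessLaplacianUJL n m).det =
        (((x - 4) * (x - 8)) • (1 : Matrix (ZMod n × ZMod m) (ZMod n × ZMod m) ℝ) -
            (x - 4) • ((cycleGraph n).boxProd (cycleGraph m)).adjMatrix ℝ -
            Mmat n m * (Mmat n m)ᵀ).det := by
  
  haveI : NeZero n := ⟨by omega⟩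
  haveI : NeZero m := ⟨by omega⟩
  have h1n : (1 : ZMod n) ≠ 0 := aux_one_ne_zero hn
  have h1m : (1 : ZMod m) ≠ 0 := aux_one_ne_zero hm
  have h2n : (2 : ZMod n) ≠ 0 := aux_two_ne_zero hn
  have h2m : (2 : ZMod m) ≠ 0 := aux_two_ne_zero hm
  set P := ZMod n × ZMod m with hP
  set A := ((cycleGraph n).boxProd (cycleGraph m)).adjMatrix ℝ with hA
  set Mm := Mmat n m with hMm
  have key : ∀ y : ℝ, y ≠ 4 →
      (y • (1 : Matrix (UJLVert n m) (UJLVert n m) ℝ) - signlessLaplacianUJL n m).det =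
        (((y - 4) * (y - 8)) • (1 : Matrix P P ℝ) - (y - 4) • A - Mm * Mmᵀ).det := by
    intro y hy
    have hy4 : y - 4 ≠ 0 := sub_ne_zero.mpr hy
    have hblock : y • (1 : Matrix (UJLVert n m) (UJLVert n m) ℝ) - signlessLaplacianUJL n m =
        Matrix.fromBlocks ((y - 8) • (1 : Matrix P P ℝ) - A) (-Mm) (-(Mmᵀ))
          ((y - 4) • (1 : Matrix P P ℝ)) := by
      ext w₁ w₂
      rcases w₁ with p | p <;> rcases w₂ with q | q
      · simp only [Matrix.sub_apply, Matrix.smul_apply, Matrix.one_apply, smul_eq_mul,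
          signlessLaplacianUJL, Matrix.add_apply, Matrix.diagonal_apply,
          SimpleGraph.adjMatrix_apply, Matrix.fromBlocks_apply₁₁, Sum.inl.injEq,
          UJL_adj_inl_inl h1n h1m, degree_inl h1n h1m h2n h2m, hA]
        by_cases h : p = q <;>
          simp [h, SimpleGraph.irrefl] <;> ring
      · simp only [Matrix.sub_apply, Matrix.smul_apply, Matrix.one_apply, smul_eq_mul,
          signlessLaplacianUJL, Matrix.add_apply, Matrix.diagonal_apply,
          SimpleGraph.adjMatrix_apply, Matrix.fromBlocks_apply₁₂, reduceCtorEq,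
          UJL_adj_inl_inr, if_false, Matrix.neg_apply, hMm, Mmat, Matrix.of_apply]
        simp
      · simp only [Matrix.sub_apply, Matrix.smul_apply, Matrix.one_apply, smul_eq_mul,
          signlessLaplacianUJL, Matrix.add_apply, Matrix.diagonal_apply,
          SimpleGraph.adjMatrix_apply, Matrix.fromBlocks_apply₂₁, reduceCtorEq,
          if_false, Matrix.neg_apply, Matrix.transpose_apply, hMm, Mmat, Matrix.of_apply]
        rw [(UJL n m).adj_comm, UJL_adj_inl_inr]
        simp
      · simp only [Matrix.sub_apply, Matrix.smul_apply, Matrix.one_apply, smul_eq_mul,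
          signlessLaplacianUJL, Matrix.add_apply, Matrix.diagonal_apply,
          SimpleGraph.adjMatrix_apply, Matrix.fromBlocks_apply₂₂, Sum.inr.injEq,
          degree_inr h1n h1m, UJL_not_adj_inr_inr, if_false]
        by_cases h : p = q <;> simp [h] <;> ring
    rw [hblock]
    haveI : Invertible ((y - 4) • (1 : Matrix P P ℝ)) :=
      ⟨(y - 4)⁻¹ • (1 : Matrix P P ℝ), by
        rw [Matrix.smul_mul, Matrix.one_mul, smul_smul, inv_mul_cancel₀ hy4, one_smul], by
        rw [Matrix.smul_mul, Matrix.one_mul, smul_smul, mul_inv_cancel₀ hy4, one_smul]⟩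
    have hinv : ⅟((y - 4) • (1 : Matrix P P ℝ)) = (y - 4)⁻¹ • (1 : Matrix P P ℝ) :=
      invOf_eq_right_inv (by
        rw [Matrix.smul_mul, Matrix.one_mul, smul_smul, mul_inv_cancel₀ hy4, one_smul])
    rw [Matrix.det_fromBlocks₂₂, hinv, Matrix.det_smul, Matrix.det_one, mul_one]
    have hS : ((y - 4) * (y - 8)) • (1 : Matrix P P ℝ) - (y - 4) • A - Mm * Mmᵀ =
        (y - 4) • (((y - 8) • (1 : Matrix P P ℝ) - A) -
          (-Mm) * ((y - 4)⁻¹ • (1 : Matrix P P ℝ)) * (-(Mmᵀ))) := by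
      simp only [Matrix.neg_mul, Matrix.mul_neg, neg_neg, Matrix.mul_smul, Matrix.mul_one,
        Matrix.smul_mul, smul_sub, smul_smul, smul_neg, mul_inv_cancel₀ hy4, one_smul, neg_neg]
    rw [hS, Matrix.det_smul]
  have hf : Continuous fun y : ℝ =>
      (y • (1 : Matrix (UJLVert n m) (UJLVert n m) ℝ) - signlessLaplacianUJL n m).det := by
    apply Continuous.matrix_det
    apply continuous_matrix
    intro i j
    simp only [Matrix.sub_apply, Matrix.smul_apply, smul_eq_mul]
    fun_prop
  have hg : Continuous fun y : ℝ =>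
      (((y - 4) * (y - 8)) • (1 : Matrix P P ℝ) - (y - 4) • A - Mm * Mmᵀ).det := by
    apply Continuous.matrix_det
    apply continuous_matrix
    intro i j
    simp only [Matrix.sub_apply, Matrix.smul_apply, smul_eq_mul]
    fun_prop
  have heq := Continuous.ext_on (dense_compl_singleton (4 : ℝ)) hf hg
    (fun y hy => key y (by simpa using hy))
  intro x
  exact congrFun heq x
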